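/- arXiv:1104.5532 — 3 statements merged into one kernel-verified Lean document; each statement's English description precedes it below -/
import Mathlib

section
/- For a connected graph consisting of a clique on C vertices and a path on P vertices attached via α edges joining the first path vertex to α clique vertices (with C+P=N), the sum of all pairwise shortest-path distances equals C(C,2) + C·C(P+1,2) + P(C-α) + C(P+1,3), where C(n,k) denotes binomial coefficients. -/
/-- The graph on `Fin C ⊕ Fin P` consisting of a clique on `C` vertices and a path
`v_1 - ⋯ - v_P`, where the first path vertex `v_1` is joined to the first `α` clique
vertices. -/
def cliquePathGraph (C P α : ℕ) : SimpleGraph (Fin C ⊕ Fin P) :=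
  SimpleGraph.fromRel fun a b =>
    match a, b with
    | Sum.inl _, Sum.inl _ => True
    | Sum.inl i, Sum.inr x => (x : ℕ) = 0 ∧ (i : ℕ) < α
    | Sum.inr x, Sum.inr y => (x : ℕ) + 1 = (y : ℕ)
    | Sum.inr _, Sum.inl _ => False

open Sum SimpleGraph Finset

section aux

variable {C P α : ℕ}

lemma cpg_adj_inl_inl {i j : Fin C} (h : i ≠ j) :
    (cliquePathGraph C P α).Adj (inl i) (inl j) := by
  simp [cliquePathGraph, SimpleGraph.fromRel_adj, h]

lemma cpg_adj_inl_inr {i : Fin C} {x : Fin P} (hx : (x : ℕ) = 0) (hi : (i : ℕ) < α) :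
    (cliquePathGraph C P α).Adj (inl i) (inr x) := by
  simp [cliquePathGraph, SimpleGraph.fromRel_adj, hx, hi]

lemma cpg_adj_inr_inr {x y : Fin P} (h : (x : ℕ) + 1 = (y : ℕ)) :
    (cliquePathGraph C P α).Adj (inr x) (inr y) := by
  refine (SimpleGraph.fromRel_adj _ _ _).2 ⟨?_, Or.inl h⟩
  intro he
  rw [Sum.inr.injEq, Fin.ext_iff] at he
  omega

/-- walk up the path -/
lemma cpg_walk_inr : ∀ (k : ℕ) (x y : Fin P), (x : ℕ) + k = (y : ℕ) →
    ∃ w : (cliquePathGraph C P α).Walk (inr x) (inr y), w.length = k := by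
  intro k
  induction k with
  | zero =>
    intro x y h
    have : x = y := Fin.ext (by omega)
    subst this
    exact ⟨.nil, rfl⟩
  | succ k ih =>
    intro x y h
    have hx1 : (x : ℕ) + 1 < P := by have := y.isLt; omega
    obtain ⟨w, hw⟩ := ih ⟨x + 1, hx1⟩ y (by simp; omega)
    exact ⟨.cons (cpg_adj_inr_inr (by simp)) w, by simp [hw]⟩

/-- a walk from a clique vertex to a path vertex of the right length -/
lemma cpg_walk_inl_inr (hα1 : 1 ≤ α) (i : Fin C) (x : Fin P) :
    ∃ w : (cliquePathGraph C P α).Walk (inl i) (inr x),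
      w.length = if (i : ℕ) < α then (x : ℕ) + 1 else (x : ℕ) + 2 := by
  have hP : 0 < P := x.pos
  set x0 : Fin P := ⟨0, hP⟩ with hx0
  obtain ⟨w, hw⟩ := cpg_walk_inr (α := α) (C := C) (x : ℕ) x0 x (by simp [hx0])
  by_cases hi : (i : ℕ) < α
  · exact ⟨.cons (cpg_adj_inl_inr rfl hi) w, by simp [hw, hi]⟩
  · have hC : 0 < C := i.pos
    set c0 : Fin C := ⟨0, hC⟩ with hc0
    have hne : i ≠ c0 := by
      intro h; rw [Fin.ext_iff] at h; simp [hc0] at h; omega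
    refine ⟨.cons (cpg_adj_inl_inl hne) (.cons (cpg_adj_inl_inr rfl ?_) w), by simp [hw, hi]⟩
    simp [hc0]; omega

/-- Lipschitz potential lower bound along walks -/
lemma lip_walk {V : Type*} {G : SimpleGraph V} {f : V → ℕ}
    (hf : ∀ a b, G.Adj a b → f a ≤ f b + 1) {u v : V} (w : G.Walk u v) :
    f u ≤ f v + w.length := by
  induction w with
  | nil => simp
  | cons h p ih =>
    have := hf _ _ h
    simp only [SimpleGraph.Walk.length_cons]
    omega

lemma lip_dist {V : Type*} {G : SimpleGraph V} {f : V → ℕ}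
    (hf : ∀ a b, G.Adj a b → f a ≤ f b + 1) {u v : V} (w : G.Walk u v) :
    f u ≤ f v + G.dist u v ∧ f v ≤ f u + G.dist u v := by
  obtain ⟨p, hp⟩ := (w.reachable).exists_walk_length_eq_dist
  constructor
  · have := lip_walk hf p; omega
  · have := lip_walk hf p.reverse
    rw [SimpleGraph.Walk.length_reverse] at this
    omega

/-- first potential -/
lemma f1_lip : ∀ a b, (cliquePathGraph C P α).Adj a b →
    Sum.elim (fun _ : Fin C => 0) (fun x : Fin P => (x : ℕ) + 1) a ≤
      Sum.elim (fun _ : Fin C => 0) (fun x : Fin P => (x : ℕ) + 1) b + 1 := by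
  rintro (i | x) (j | y) h <;>
    simp only [cliquePathGraph, SimpleGraph.fromRel_adj] at h <;>
    simp_all <;> omega

/-- second potential -/
lemma f2_lip : ∀ a b, (cliquePathGraph C P α).Adj a b →
    Sum.elim (fun i : Fin C => if (i : ℕ) < α then 1 else 0)
      (fun x : Fin P => (x : ℕ) + 2) a ≤
      Sum.elim (fun i : Fin C => if (i : ℕ) < α then 1 else 0)
        (fun x : Fin P => (x : ℕ) + 2) b + 1 := by
  rintro (i | x) (j | y) h <;>
    simp only [cliquePathGraph, SimpleGraph.fromRel_adj] at h <;>
    simp_all <;> (try split_ifs) <;> omega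

lemma cpg_dist_inl_inl {i j : Fin C} (h : i ≠ j) (hP : 0 < P) (hα1 : 1 ≤ α) :
    (cliquePathGraph C P α).dist (inl i) (inl j) = 1 :=
  SimpleGraph.dist_eq_one_iff_adj.2 (cpg_adj_inl_inl h)

lemma cpg_dist_inr_inr {x y : Fin P} (hC : 0 < C) (h : (x : ℕ) ≤ (y : ℕ)) :
    (cliquePathGraph C P α).dist (inr x) (inr y) = (y : ℕ) - (x : ℕ) := by
  obtain ⟨w, hw⟩ := cpg_walk_inr (α := α) (C := C) ((y : ℕ) - x) x y (by omega)
  have hub := SimpleGraph.dist_le w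
  have hlb := (lip_dist f1_lip w).2
  simp only [Sum.elim_inr] at hlb
  omega

lemma cpg_dist_inl_inr (hα1 : 1 ≤ α) (i : Fin C) (x : Fin P) :
    (cliquePathGraph C P α).dist (inl i) (inr x) =
      if (i : ℕ) < α then (x : ℕ) + 1 else (x : ℕ) + 2 := by
  obtain ⟨w, hw⟩ := cpg_walk_inl_inr hα1 i x
  have hub := SimpleGraph.dist_le w
  have hlb1 := (lip_dist f1_lip w).2
  have hlb2 := (lip_dist f2_lip w).2
  simp only [Sum.elim_inr, Sum.elim_inl] at hlb1 hlb2
  rw [hw] at hub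
  split_ifs with hi
  · simp only [if_pos hi] at hub ⊢
    omega
  · simp only [if_neg hi] at hub hlb2 ⊢
    omega

end aux

/-- helper sums -/
lemma sum_range_succ_id (n : ℕ) : ∑ x ∈ Finset.range n, (x + 1) = (n + 1).choose 2 := by
  induction n with
  | zero => simp
  | succ n ih =>
    rw [Finset.sum_range_succ, ih, Nat.choose_succ_succ (n + 1) 1]
    simp [Nat.add_comm]

lemma sum_range_nsub (n : ℕ) : ∑ x ∈ Finset.range n, (n - x) = (n + 1).choose 2 := by
  rw [← sum_range_succ_id n, ← Finset.sum_range_reflect]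
  refine Finset.sum_congr rfl fun x hx => ?_
  rw [Finset.mem_range] at hx
  omega

lemma sum_sum_absdiff (n : ℕ) :
    ∑ x ∈ Finset.range n, ∑ y ∈ Finset.range n, (max x y - min x y) =
      2 * (n + 1).choose 3 := by
  induction n with
  | zero => decide
  | succ n ih =>
    rw [Finset.sum_range_succ]
    have h1 : ∀ x ∈ Finset.range n, ∑ y ∈ Finset.range (n+1), (max x y - min x y)
        = (∑ y ∈ Finset.range n, (max x y - min x y)) + (n - x) := by
      intro x hx
      rw [Finset.mem_range] at hx
      rw [Finset.sum_range_succ]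
      congr 1
      omega
    rw [Finset.sum_congr rfl h1, Finset.sum_add_distrib, ih, sum_range_nsub]
    have h2 : ∑ y ∈ Finset.range (n+1), (max n y - min n y)
        = (n + 1).choose 2 := by
      rw [Finset.sum_range_succ, ← sum_range_nsub n]
      simp only [Nat.max_self, Nat.min_self, Nat.sub_self, Nat.add_zero]
      refine Finset.sum_congr rfl fun y hy => ?_
      rw [Finset.mem_range] at hy
      omega
    rw [h2, Nat.choose_succ_succ (n + 1) 2]
    ring

lemma sum_ite_ge (q c a : ℕ) (h : a ≤ c) :
    ∑ i ∈ Finset.range c, (if i < a then 0 else q) = q * (c - a) := by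
  induction c with
  | zero => simp
  | succ c ih =>
    rcases Nat.lt_or_ge c a with hca | hca
    · have ha : a = c + 1 := by omega
      subst ha
      rw [Finset.sum_eq_zero fun i hi => by
        rw [Finset.mem_range] at hi; simp [hi]]
      simp
    · rw [Finset.sum_range_succ, ih hca, if_neg (by omega)]
      have : c + 1 - a = (c - a) + 1 := by omega
      rw [this, Nat.mul_add, Nat.mul_one]

lemma two_mul_choose_two (n : ℕ) : 2 * n.choose 2 = n * (n - 1) := by
  induction n with
  | zero => simp
  | succ n ih =>
    rw [Nat.choose_succ_succ n 1, Nat.mul_add, ih, Nat.choose_one_right]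
    cases n <;> simp <;> ring

/-- For the clique-plus-path graph, the sum of pairwise shortest-path distances (over
ordered pairs, i.e. twice the sum over unordered pairs) equals
`2 * (C(C,2) + C·C(P+1,2) + P(C-α) + C(P+1,3))`. -/
theorem stmt_7 (C P α : ℕ) (hC : 1 ≤ C) (hP : 1 ≤ P) (hα1 : 1 ≤ α) (hα2 : α ≤ C - 1) :
    ∑ u : Fin C ⊕ Fin P, ∑ v : Fin C ⊕ Fin P, (cliquePathGraph C P α).dist u v =
      2 * (C.choose 2 + C * (P + 1).choose 2 + P * (C - α) + (P + 1).choose 3) := by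
  have hαC : α ≤ C := by omega
  -- distance formulas
  have dcc : ∀ i j : Fin C, (cliquePathGraph C P α).dist (inl i) (inl j)
      = if i = j then 0 else 1 := by
    intro i j
    split_ifs with h
    · subst h; exact SimpleGraph.dist_self
    · exact cpg_dist_inl_inl h hP hα1
  have dcp : ∀ (i : Fin C) (x : Fin P), (cliquePathGraph C P α).dist (inl i) (inr x)
      = if (i : ℕ) < α then (x : ℕ) + 1 else (x : ℕ) + 2 :=
    cpg_dist_inl_inr hα1
  have dpc : ∀ (i : Fin C) (x : Fin P), (cliquePathGraph C P α).dist (inr x) (inl i)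
      = if (i : ℕ) < α then (x : ℕ) + 1 else (x : ℕ) + 2 := by
    intro i x; rw [SimpleGraph.dist_comm]; exact dcp i x
  have dpp : ∀ x y : Fin P, (cliquePathGraph C P α).dist (inr x) (inr y)
      = max (x : ℕ) (y : ℕ) - min (x : ℕ) (y : ℕ) := by
    intro x y
    rcases le_or_gt (x : ℕ) (y : ℕ) with h | h
    · rw [cpg_dist_inr_inr hC h]; omega
    · rw [SimpleGraph.dist_comm, cpg_dist_inr_inr hC (le_of_lt h)]; omega
  rw [Fintype.sum_sum_type]
  simp only [Fintype.sum_sum_type, dcc, dcp, dpc, dpp]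
  rw [Finset.sum_add_distrib, Finset.sum_add_distrib]
  -- clique-clique sum
  have hA : ∑ i : Fin C, ∑ j : Fin C, (if i = j then 0 else 1) = C * (C - 1) := by
    have : ∀ i : Fin C, ∑ j : Fin C, (if i = j then 0 else 1) = C - 1 := by
      intro i
      rw [← Finset.sum_erase_add _ _ (Finset.mem_univ i), if_pos rfl, Nat.add_zero]
      rw [Finset.sum_congr rfl (fun j hj =>
        if_neg (fun h => (Finset.mem_erase.1 hj).1 h.symm))]
      simp [Finset.card_erase_of_mem]
    rw [Finset.sum_congr rfl fun i _ => this i]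
    simp [Finset.card_univ, Nat.mul_comm]
  -- mixed sums
  have hSx : ∑ x : Fin P, ((x : ℕ) + 1) = (P + 1).choose 2 := by
    rw [Fin.sum_univ_eq_sum_range (fun x => x + 1)]
    exact sum_range_succ_id P
  have hB : ∑ i : Fin C, ∑ x : Fin P, (if (i : ℕ) < α then (x : ℕ) + 1 else (x : ℕ) + 2)
      = C * (P + 1).choose 2 + P * (C - α) := by
    have inner : ∀ i : Fin C, ∑ x : Fin P, (if (i : ℕ) < α then (x : ℕ) + 1 else (x : ℕ) + 2)
        = (P + 1).choose 2 + (if (i : ℕ) < α then 0 else P) := by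
      intro i
      split_ifs with hi
      · rw [hSx]; ring
      · have h2 : ∑ x : Fin P, ((x : ℕ) + 2)
            = (∑ x : Fin P, ((x : ℕ) + 1)) + ∑ _x : Fin P, 1 := by
          rw [← Finset.sum_add_distrib]
        rw [h2, hSx]
        simp [Finset.card_univ]
    rw [Finset.sum_congr rfl fun i _ => inner i, Finset.sum_add_distrib]
    rw [Finset.sum_const, Finset.card_univ, Fintype.card_fin, smul_eq_mul]
    rw [Fin.sum_univ_eq_sum_range (fun i => if i < α then 0 else P), sum_ite_ge P C α hαC]
  have hB' : ∑ x : Fin P, ∑ i : Fin C, (if (i : ℕ) < α then (x : ℕ) + 1 else (x : ℕ) + 2)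
      = C * (P + 1).choose 2 + P * (C - α) := by
    rw [Finset.sum_comm]; exact hB
  -- path-path sum
  have hD : ∑ x : Fin P, ∑ y : Fin P, (max (x : ℕ) (y : ℕ) - min (x : ℕ) (y : ℕ))
      = 2 * (P + 1).choose 3 := by
    rw [Fin.sum_univ_eq_sum_range (fun x => ∑ y : Fin P, (max x (y : ℕ) - min x (y : ℕ)))]
    rw [Finset.sum_congr rfl fun x _ =>
      Fin.sum_univ_eq_sum_range (fun y => max x y - min x y) P]
    exact sum_sum_absdiff P
  rw [hA, hB, hB', hD]
  have := two_mul_choose_two C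
  omega
end

section
/- Every connected simple graph on N vertices with at least C(N-2,2)+1 edges has radius at most 2. -/
/-- The eccentricity of a vertex: its maximum distance to any vertex. -/
noncomputable def eccentr {V : Type*} [Fintype V] (G : SimpleGraph V) (u : V) : ℕ :=
  Finset.univ.sup (G.dist u)

/-- The radius of a graph: the minimum eccentricity over all vertices. -/
noncomputable def graphRadius {V : Type*} [Fintype V] (G : SimpleGraph V) : ℕ :=
  sInf (Set.range (eccentr G))

private lemma walk_closed {V : Type*} (G : SimpleGraph V) (P : V → Prop)
    (hP : ∀ a b, P a → G.Adj a b → P b) :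
    ∀ {a b : V}, G.Walk a b → P a → P b := by
  intro a b p
  induction p with
  | nil => exact id
  | cons h q ih => intro ha; exact ih (hP _ _ ha h)

private lemma adj_dist_le {V : Type*} {G : SimpleGraph V} {a b : V} (h : G.Adj a b) :
    G.dist a b ≤ 1 := by
  simpa using SimpleGraph.dist_le (SimpleGraph.Walk.cons h SimpleGraph.Walk.nil)

private lemma common_dist_le {V : Type*} {G : SimpleGraph V} {a y b : V}
    (h1 : G.Adj a y) (h2 : G.Adj y b) : G.dist a b ≤ 2 := by
  simpa using SimpleGraph.dist_le
    (SimpleGraph.Walk.cons h1 (SimpleGraph.Walk.cons h2 SimpleGraph.Walk.nil))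

/-- Basic consequences of `3 ≤ dist w z`. -/
private lemma far_facts {V : Type*} {G : SimpleGraph V} {w z : V} (h : 3 ≤ G.dist w z) :
    w ≠ z ∧ ¬ G.Adj w z ∧ ∀ y, G.Adj w y → ¬ G.Adj z y := by
  refine ⟨?_, ?_, ?_⟩
  · rintro rfl; simp [SimpleGraph.dist_self] at h
  · intro hadj; have := adj_dist_le hadj; omega
  · intro y hwy hzy
    have := common_dist_le hwy hzy.symm
    omega

/-- Every connected simple graph on `N` vertices with at least `C(N-2,2)+1` edges has
radius at most 2. -/
theorem stmt_16 {V : Type*} [Fintype V] (G : SimpleGraph V) [DecidableRel G.Adj]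
    (hG : G.Connected)
    (hm : (Fintype.card V - 2).choose 2 + 1 ≤ G.edgeFinset.card) :
    graphRadius G ≤ 2 := by
  classical
  by_contra hrad
  have hr3 : 3 ≤ graphRadius G := by omega
  have ecc3 : ∀ u : V, 3 ≤ eccentr G u := fun u =>
    le_trans hr3 (Nat.sInf_le ⟨u, rfl⟩)
  have far : ∀ u : V, ∃ v : V, 3 ≤ G.dist u v := by
    intro u
    by_contra hno
    push_neg at hno
    have : eccentr G u ≤ 2 := Finset.sup_le fun v _ => by have := hno v; omega
    have := ecc3 u; omega
  set n := Fintype.card V with hn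
  by_cases hsmall : ∃ u : V, Gᶜ.degree u ≤ 2
  · -- small complement degree: connectivity contradiction
    obtain ⟨u, hu2⟩ := hsmall
    obtain ⟨v, huv⟩ := far u
    obtain ⟨hne, hnadj, hcom⟩ := far_facts huv
    -- v has a neighbor x
    have hvu3 : 3 ≤ G.dist v u := by rwa [SimpleGraph.dist_comm] at huv
    obtain ⟨p, hp⟩ := (hG v u).exists_walk_length_eq_dist
    obtain ⟨x, hvx, q⟩ : ∃ x, G.Adj v x ∧ Nonempty (G.Walk x u) := by
      cases p with
      | nil => rw [SimpleGraph.dist_self] at hvu3; omega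
      | cons h q => exact ⟨_, h, ⟨q⟩⟩
    -- every neighbor of v is in Gᶜ.neighborFinset u, as is v
    have hNv : ∀ y, G.Adj v y → y ∈ Gᶜ.neighborFinset u := by
      intro y hy
      rw [SimpleGraph.mem_neighborFinset, SimpleGraph.compl_adj]
      constructor
      · rintro rfl
        have := adj_dist_le hy.symm
        rw [SimpleGraph.dist_comm] at this; omega
      · intro huy
        exact hcom y huy hy
    have hvmem : v ∈ Gᶜ.neighborFinset u := by
      rw [SimpleGraph.mem_neighborFinset, SimpleGraph.compl_adj]
      exact ⟨hne, hnadj⟩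
    have hxmem : x ∈ Gᶜ.neighborFinset u := hNv x hvx
    have hvxne : v ≠ x := G.ne_of_adj hvx
    have hsub : ({v, x} : Finset V) ⊆ Gᶜ.neighborFinset u := by
      intro y hy
      rcases Finset.mem_insert.mp hy with rfl | hy
      · exact hvmem
      · rw [Finset.mem_singleton] at hy; subst hy; exact hxmem
    have hcard : ({v, x} : Finset V).card = 2 := by
      rw [Finset.card_insert_of_notMem (by simp [hvxne]), Finset.card_singleton]
    have hEq : ({v, x} : Finset V) = Gᶜ.neighborFinset u := by
      apply Finset.eq_of_subset_of_card_le hsub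
      rw [hcard]
      exact hu2
    have hK : ∀ y : V, y ≠ u → ¬ G.Adj u y → y = v ∨ y = x := by
      intro y hyu hadj
      have : y ∈ Gᶜ.neighborFinset u := by
        rw [SimpleGraph.mem_neighborFinset, SimpleGraph.compl_adj]
        exact ⟨fun h => hyu h.symm, hadj⟩
      rw [← hEq] at this
      simpa using this
    have hunx : ¬ G.Adj u x ∧ u ≠ x := by
      have := hxmem
      rw [SimpleGraph.mem_neighborFinset, SimpleGraph.compl_adj] at this
      exact ⟨this.2, this.1⟩
    -- every neighbor of x is v
    have hxN : ∀ y, G.Adj x y → y = v := by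
      intro y hy
      by_contra hyv
      have hyu : y ≠ u := by
        rintro rfl
        exact hunx.1 hy.symm
      have hyx : y ≠ x := fun h => G.loopless.irrefl x (h ▸ hy)
      have huy : G.Adj u y := by
        by_contra hnuy
        rcases hK y hyu hnuy with h | h
        · exact hyv h
        · exact hyx h
      obtain ⟨z, hz⟩ := far y
      obtain ⟨hz1, hz2, hz3⟩ := far_facts hz
      have hzu : z ≠ u := by
        rintro rfl
        have := adj_dist_le huy.symm
        omega
      have hznu : ¬ G.Adj u z := fun h => hz3 u huy.symm h.symm
      rcases hK z hzu hznu with rfl | rfl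
      · -- z = v : x is a common neighbor of y and v
        exact hz3 x hy.symm hvx
      · -- z = x : y adjacent to z
        exact hz2 hy.symm
    -- {v, x} is closed under adjacency, contradicting connectivity
    have hclosed : ∀ a b : V, (a = v ∨ a = x) → G.Adj a b → (b = v ∨ b = x) := by
      rintro a b (rfl | rfl) hab
      · right
        have := hNv b hab
        rw [← hEq] at this
        rcases Finset.mem_insert.mp this with h | h
        · exact absurd h (G.ne_of_adj hab).symm
        · simpa using h
      · left; exact hxN b hab
    obtain ⟨pw⟩ := hG v u
    rcases walk_closed G (fun w => w = v ∨ w = x) hclosed pw (Or.inl rfl) with h | h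
    · exact hne h
    · exact hunx.2 h
  · -- all complement degrees ≥ 3: edge counting
    push_neg at hsmall
    have hbig : ∀ w : V, 3 ≤ Gᶜ.degree w := fun w => hsmall w
    have : Nonempty V := hG.nonempty
    obtain ⟨s⟩ := this
    obtain ⟨t, hst3⟩ := far s
    obtain ⟨hstne, hstnadj, hstcom⟩ := far_facts hst3
    -- union of complement neighborhoods is everything
    have hUnion : Gᶜ.neighborFinset s ∪ Gᶜ.neighborFinset t = Finset.univ := by
      apply Finset.eq_univ_of_forall
      intro y
      rw [Finset.mem_union, SimpleGraph.mem_neighborFinset, SimpleGraph.mem_neighborFinset,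
        SimpleGraph.compl_adj, SimpleGraph.compl_adj]
      by_cases hys : y = s
      · subst hys
        exact Or.inr ⟨fun h => hstne h.symm, fun h => hstnadj h.symm⟩
      by_cases hyt : y = t
      · subst hyt
        exact Or.inl ⟨hstne, hstnadj⟩
      by_cases hadj : G.Adj s y
      · exact Or.inr ⟨fun h => hyt h.symm, fun h => hstcom y hadj h⟩
      · exact Or.inl ⟨fun h => hys h.symm, hadj⟩
    have hdegsum : n ≤ Gᶜ.degree s + Gᶜ.degree t := by
      calc n = Finset.univ.card := rfl
        _ = (Gᶜ.neighborFinset s ∪ Gᶜ.neighborFinset t).card := by rw [hUnion]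
        _ ≤ (Gᶜ.neighborFinset s).card + (Gᶜ.neighborFinset t).card := Finset.card_union_le _ _
        _ = Gᶜ.degree s + Gᶜ.degree t := rfl
    have hn2 : 2 ≤ n := Fintype.one_lt_card_iff_nontrivial.mpr ⟨⟨s, t, hstne⟩⟩
    -- degree sum bound
    have e1 : ∑ w, Gᶜ.degree w
        = Gᶜ.degree s + ∑ w ∈ Finset.univ.erase s, Gᶜ.degree w :=
      (Finset.add_sum_erase _ _ (Finset.mem_univ s)).symm
    have htmem : t ∈ Finset.univ.erase s :=
      Finset.mem_erase.mpr ⟨fun h => hstne h.symm, Finset.mem_univ t⟩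
    have e2 : ∑ w ∈ Finset.univ.erase s, Gᶜ.degree w
        = Gᶜ.degree t + ∑ w ∈ (Finset.univ.erase s).erase t, Gᶜ.degree w :=
      (Finset.add_sum_erase _ _ htmem).symm
    have e3 : ((Finset.univ.erase s).erase t).card • 3
        ≤ ∑ w ∈ (Finset.univ.erase s).erase t, Gᶜ.degree w :=
      Finset.card_nsmul_le_sum _ _ _ (fun x _ => hbig x)
    have ecard : ((Finset.univ.erase s).erase t).card = n - 2 := by
      rw [Finset.card_erase_of_mem htmem, Finset.card_erase_of_mem (Finset.mem_univ s)]
      rfl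
    have hhand : ∑ w, Gᶜ.degree w = 2 * Gᶜ.edgeFinset.card :=
      SimpleGraph.sum_degrees_eq_twice_card_edges _
    rw [ecard, smul_eq_mul] at e3
    have hmbar : 2 * Gᶜ.edgeFinset.card ≥ n + 3 * (n - 2) := by omega
    -- edges + non-edges ≤ choose n 2
    have hdisj : Disjoint G.edgeFinset Gᶜ.edgeFinset := by
      rw [Finset.disjoint_left]
      intro e he he'
      rw [SimpleGraph.mem_edgeFinset] at he he'
      induction e with
      | h a b =>
        rw [SimpleGraph.mem_edgeSet] at he he'
        rw [SimpleGraph.compl_adj] at he'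
        exact he'.2 he
    have hsub1 : G.edgeFinset ∪ Gᶜ.edgeFinset ⊆ (⊤ : SimpleGraph V).edgeFinset := by
      apply Finset.union_subset
      · exact SimpleGraph.edgeFinset_mono le_top
      · exact SimpleGraph.edgeFinset_mono le_top
    have htot : G.edgeFinset.card + Gᶜ.edgeFinset.card ≤ n.choose 2 := by
      rw [← Finset.card_union_of_disjoint hdisj]
      calc (G.edgeFinset ∪ Gᶜ.edgeFinset).card
          ≤ (⊤ : SimpleGraph V).edgeFinset.card := Finset.card_le_card hsub1
        _ = n.choose 2 := SimpleGraph.card_edgeFinset_top_eq_card_choose_two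
    obtain ⟨k, hk⟩ : ∃ k, n = k + 2 := ⟨n - 2, by omega⟩
    have hid : (k + 2).choose 2 = k.choose 2 + (2 * k + 1) := by
      have h1 : (k + 2).choose 2 = (k + 1).choose 1 + (k + 1).choose 2 :=
        Nat.choose_succ_succ (k + 1) 1
      have h2 : (k + 1).choose 2 = k.choose 1 + k.choose 2 := Nat.choose_succ_succ k 1
      rw [h1, h2, Nat.choose_one_right, Nat.choose_one_right]
      omega
    rw [hk] at htot hmbar
    have hm' : k.choose 2 + 1 ≤ G.edgeFinset.card := by
      have : n - 2 = k := by omega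
      rwa [this] at hm
    rw [hid] at htot
    omega
end

section
/- If a vertex u is removed from a connected graph G and the resulting graph H is connected, then diam(G) ≤ diam(H) + 1 provided every diametral pair of G contains u; in general, for the maximum diameter over connected graphs of given order and size, T_max(N,m) ≤ T_max(N-1, m-d) + 1 for any achievable degree d of a removed vertex. -/
open scoped Classical

/-- The diameter of a graph: the maximum pairwise shortest-path distance. -/
noncomputable def graphDiam {V : Type*} [Fintype V] (G : SimpleGraph V) : ℕ :=
  Finset.univ.sup fun u => Finset.univ.sup (G.dist u)

/-- `T_max N m`: the maximum diameter over all connected simple graphs with `N` vertices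
and `m` edges. -/
noncomputable def Tmax (N m : ℕ) : ℕ :=
  sSup {k | ∃ G : SimpleGraph (Fin N), G.Connected ∧ G.edgeSet.ncard = m ∧ graphDiam G = k}

section Aux

open SimpleGraph

lemma dist_le_graphDiam {W : Type*} [Fintype W] (G : SimpleGraph W) (a b : W) :
    G.dist a b ≤ graphDiam G :=
  le_trans (Finset.le_sup (Finset.mem_univ b))
    (Finset.le_sup (f := fun x => Finset.univ.sup (G.dist x)) (Finset.mem_univ a))

lemma graphDiam_le_iff {W : Type*} [Fintype W] {G : SimpleGraph W} {n : ℕ} :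
    graphDiam G ≤ n ↔ ∀ a b, G.dist a b ≤ n := by
  simp [graphDiam, Finset.sup_le_iff]

lemma graphDiam_le_card {W : Type*} [Fintype W] (G : SimpleGraph W) :
    graphDiam G ≤ Fintype.card W := by
  rw [graphDiam_le_iff]
  intro a b
  by_cases h : G.Reachable a b
  · obtain ⟨p⟩ := h
    calc G.dist a b ≤ p.bypass.length := SimpleGraph.dist_le _
      _ ≤ Fintype.card W := le_of_lt p.bypass_isPath.length_lt
  · simp [SimpleGraph.dist_eq_zero_of_not_reachable h]

lemma iso_dist_le {W W' : Type*} {A : SimpleGraph W} {B : SimpleGraph W'} (f : A ≃g B)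
    (a b : W) : B.dist (f a) (f b) ≤ A.dist a b := by
  by_cases h : A.Reachable a b
  · obtain ⟨p, hp⟩ := h.exists_walk_length_eq_dist
    calc B.dist (f a) (f b) ≤ (p.map f.toHom).length := SimpleGraph.dist_le _
      _ = A.dist a b := by rw [SimpleGraph.Walk.length_map, hp]
  · rw [SimpleGraph.dist_eq_zero_of_not_reachable]
    · exact Nat.zero_le _
    · rwa [SimpleGraph.Iso.reachable_iff]

lemma iso_dist {W W' : Type*} {A : SimpleGraph W} {B : SimpleGraph W'} (f : A ≃g B)
    (a b : W) : B.dist (f a) (f b) = A.dist a b := by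
  refine le_antisymm (iso_dist_le f a b) ?_
  have := iso_dist_le f.symm (f a) (f b)
  simpa using this

lemma graphDiam_iso_le {W W' : Type*} [Fintype W] [Fintype W'] {A : SimpleGraph W}
    {B : SimpleGraph W'} (f : A ≃g B) : graphDiam A ≤ graphDiam B := by
  rw [graphDiam_le_iff]
  intro a b
  rw [← iso_dist f a b]
  exact dist_le_graphDiam _ _ _

lemma graphDiam_iso {W W' : Type*} [Fintype W] [Fintype W'] {A : SimpleGraph W}
    {B : SimpleGraph W'} (f : A ≃g B) : graphDiam A = graphDiam B :=
  le_antisymm (graphDiam_iso_le f) (graphDiam_iso_le f.symm)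

lemma diam_key {V : Type*} [Fintype V] [DecidableEq V] (G : SimpleGraph V) (u : V)
    (hH : (G.induce ({u}ᶜ : Set V)).Connected) :
    graphDiam G ≤ graphDiam (G.induce ({u}ᶜ : Set V)) + 1 := by
  set H := G.induce ({u}ᶜ : Set V) with hHdef
  let emb : H ↪g G := SimpleGraph.Embedding.induce _
  have hdist : ∀ a b : ({u}ᶜ : Set V), G.dist a.1 b.1 ≤ H.dist a b := by
    intro a b
    obtain ⟨p, hp⟩ := (hH a b).exists_walk_length_eq_dist
    calc G.dist a.1 b.1 ≤ (p.map emb.toHom).length := SimpleGraph.dist_le _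
      _ = H.dist a b := by rw [SimpleGraph.Walk.length_map, hp]
  have main : ∀ b : V, G.dist u b ≤ graphDiam H + 1 := by
    intro b
    rcases Nat.eq_zero_or_pos (G.dist u b) with h0 | hpos
    · omega
    have hne : G.dist u b ≠ 0 := hpos.ne'
    have hbu : b ≠ u := by
      intro hb
      subst hb
      simp at hne
    obtain ⟨p, hp⟩ := SimpleGraph.exists_walk_of_dist_ne_zero hne
    cases p with
    | nil => exact absurd hp.symm hne
    | @cons _ w _ h q =>
      have hwu : w ≠ u := h.ne'
      obtain ⟨r, hr⟩ :=
        (hH ⟨w, by simp [hwu]⟩ ⟨b, by simp [hbu]⟩).exists_walk_length_eq_dist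
      have hle := SimpleGraph.dist_le (SimpleGraph.Walk.cons h (r.map emb.toHom))
      change G.dist u b ≤ (r.map emb.toHom).length + 1 at hle; rw [SimpleGraph.Walk.length_map, hr] at hle
      calc G.dist u b ≤ H.dist ⟨w, by simp [hwu]⟩ ⟨b, by simp [hbu]⟩ + 1 := hle
        _ ≤ graphDiam H + 1 := by
            have := dist_le_graphDiam H ⟨w, by simp [hwu]⟩ ⟨b, by simp [hbu]⟩
            omega
  rw [graphDiam_le_iff]
  intro a b
  by_cases ha : a = u
  · subst ha; exact main b
  by_cases hb : b = u
  · subst hb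
    rw [SimpleGraph.dist_comm]
    exact main a
  calc G.dist a b ≤ H.dist ⟨a, by simp [ha]⟩ ⟨b, by simp [hb]⟩ :=
        hdist ⟨a, by simp [ha]⟩ ⟨b, by simp [hb]⟩
    _ ≤ graphDiam H := dist_le_graphDiam _ _ _
    _ ≤ graphDiam H + 1 := Nat.le_succ _

lemma edge_count {V : Type*} [Fintype V] [DecidableEq V] (G : SimpleGraph V) (u : V) :
    G.edgeSet.ncard
      = (G.induce ({u}ᶜ : Set V)).edgeSet.ncard + (G.neighborSet u).ncard := by
  classical
  set S := ({u}ᶜ : Set V) with hS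
  set H := G.induce S with hHdef
  have hinj : Function.Injective (Sym2.map (Subtype.val : S → V)) :=
    Sym2.map.injective Subtype.val_injective
  have hmemS : ∀ {x : V}, x ≠ u → x ∈ S := by
    intro x hx
    simp [hS, hx]
  have himg : (Sym2.map (Subtype.val : S → V)) '' H.edgeSet ⊆ G.edgeSet := by
    rintro e ⟨e', he', rfl⟩
    induction e' with
    | _ a b =>
      rw [Sym2.map_pair_eq]
      exact (SimpleGraph.mem_edgeSet _).mpr ((SimpleGraph.mem_edgeSet _).mp he')
  have hsplit : G.edgeSet = (Sym2.map (Subtype.val : S → V)) '' H.edgeSet ∪ G.incidenceSet u := by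
    apply Set.Subset.antisymm
    · intro e he
      induction e with
      | _ x y =>
        have hadj : G.Adj x y := (SimpleGraph.mem_edgeSet _).mp he
        by_cases hx : x = u
        · exact Or.inr ⟨he, by simp [hx]⟩
        by_cases hy : y = u
        · exact Or.inr ⟨he, by simp [hy]⟩
        refine Or.inl ⟨s(⟨x, hmemS hx⟩, ⟨y, hmemS hy⟩), ?_, ?_⟩
        · exact (SimpleGraph.mem_edgeSet _).mpr hadj
        · rw [Sym2.map_pair_eq]
    · exact Set.union_subset himg (G.incidenceSet_subset u)
  have hdisj : Disjoint ((Sym2.map (Subtype.val : S → V)) '' H.edgeSet) (G.incidenceSet u) := by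
    rw [Set.disjoint_left]
    rintro e ⟨e', he', rfl⟩ hin
    have hmem : u ∈ Sym2.map (Subtype.val : S → V) e' := hin.2
    induction e' with
    | _ a b =>
      rw [Sym2.map_pair_eq, Sym2.mem_iff] at hmem
      have ha : (a : V) ≠ u := Set.mem_compl_singleton_iff.mp a.2
      have hb : (b : V) ≠ u := Set.mem_compl_singleton_iff.mp b.2
      rcases hmem with h | h
      · exact ha h.symm
      · exact hb h.symm
  have h1 : (G.incidenceSet u).ncard = (G.neighborSet u).ncard := by
    rw [← Nat.card_coe_set_eq, ← Nat.card_coe_set_eq]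
    exact Nat.card_congr (G.incidenceSetEquivNeighborSet u)
  calc G.edgeSet.ncard
      = ((Sym2.map (Subtype.val : S → V)) '' H.edgeSet ∪ G.incidenceSet u).ncard := by
        rw [hsplit]
    _ = ((Sym2.map (Subtype.val : S → V)) '' H.edgeSet).ncard + (G.incidenceSet u).ncard :=
        Set.ncard_union_eq hdisj (Set.toFinite _) (Set.toFinite _)
    _ = H.edgeSet.ncard + (G.neighborSet u).ncard := by
        rw [Set.ncard_image_of_injective _ hinj, h1]

end Aux

/-- Removing a vertex `u` from a connected graph `G`: if the resulting graph `H` is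
connected and every diametral pair of `G` contains `u`, then `diam G ≤ diam H + 1`;
and if moreover `G` achieves the maximum diameter `T_max(N,m)` and `u` has degree `d`,
then `T_max(N,m) ≤ T_max(N-1, m-d) + 1`. -/
theorem stmt_17 {V : Type*} [Fintype V] [DecidableEq V] (G : SimpleGraph V)
    (hG : G.Connected) (u : V) (N m d : ℕ)
    (hN : N = Fintype.card V) (hm : m = G.edgeSet.ncard)
    (hd : d = (G.neighborSet u).ncard)
    (hH : (G.induce ({u}ᶜ : Set V)).Connected) :
    ((∀ a b : V, G.dist a b = graphDiam G → a = u ∨ b = u) →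
      graphDiam G ≤ graphDiam (G.induce ({u}ᶜ : Set V)) + 1) ∧
    (graphDiam G = Tmax N m → Tmax N m ≤ Tmax (N - 1) (m - d) + 1) := by
  have hkey : graphDiam G ≤ graphDiam (G.induce ({u}ᶜ : Set V)) + 1 := diam_key G u hH
  refine ⟨fun _ => hkey, fun hTm => ?_⟩
  set S := ({u}ᶜ : Set V) with hSdef
  set H := G.induce S with hHdef
  have hcardS : Fintype.card S = N - 1 := by
    rw [hN]
    have e0 : S ≃ {x : V // ¬ x = u} := Equiv.subtypeEquivRight (by simp [hSdef])
    rw [Fintype.card_congr e0, Fintype.card_subtype_compl, Fintype.card_subtype_eq]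
  have e : S ≃ Fin (N - 1) := Fintype.equivFinOfCardEq hcardS
  set G' : SimpleGraph (Fin (N - 1)) := H.comap (e.symm.toEmbedding) with hG'def
  have iso : G' ≃g H := SimpleGraph.Iso.comap e.symm H
  have hG'conn : G'.Connected := iso.connected_iff.mpr hH
  have hedge : H.edgeSet.ncard = m - d := by
    have := edge_count G u
    rw [← hd, ← hm] at this
    have h4 : H.edgeSet.ncard = (G.induce ({u}ᶜ : Set V)).edgeSet.ncard := rfl
    omega
  have hG'edge : G'.edgeSet.ncard = m - d := by
    rw [← hedge, ← Nat.card_coe_set_eq, ← Nat.card_coe_set_eq]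
    exact Nat.card_congr iso.mapEdgeSet
  have hmem : graphDiam G' ∈
      {k | ∃ G : SimpleGraph (Fin (N - 1)), G.Connected ∧ G.edgeSet.ncard = m - d
        ∧ graphDiam G = k} := ⟨G', hG'conn, hG'edge, rfl⟩
  have hbdd : BddAbove {k | ∃ G : SimpleGraph (Fin (N - 1)), G.Connected
      ∧ G.edgeSet.ncard = m - d ∧ graphDiam G = k} := by
    refine ⟨N - 1, ?_⟩
    rintro k ⟨G₀, -, -, rfl⟩
    simpa using graphDiam_le_card G₀
  have hle : graphDiam G' ≤ Tmax (N - 1) (m - d) := le_csSup hbdd hmem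
  have hdiam : graphDiam G' = graphDiam H := graphDiam_iso iso
  calc Tmax N m = graphDiam G := hTm.symm
    _ ≤ graphDiam H + 1 := hkey
    _ = graphDiam G' + 1 := by rw [hdiam]
    _ ≤ Tmax (N - 1) (m - d) + 1 := by omega
end
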